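/- The relation on T_n (pairs (t,p) of a total order t and a partial order p on {1,…,n} with p ⊆ t and the betweenness condition) defined by (t_1,p_1) ≤ (t_2,p_2) iff p_1 ⊆ p_2 and t_2 ∩ t_1^{op} ⊆ p_2 is a partial order. -/
import Mathlib


/-- An element of `T_n`: a pair `(t, p)` of a (strict) total order `t` and a (strict)
partial order `p` on `{1,…,n}` such that `p ⊆ t` and whenever `i < j < k` in `t` and
`i < k` in `p`, then `i < j` in `p`. -/
structure TPair (n : ℕ) where
  t : Fin n → Fin n → Prop
  p : Fin n → Fin n → Prop
  t_irrefl : ∀ i, ¬ t i i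
  t_trans : ∀ i j k, t i j → t j k → t i k
  t_total : ∀ i j, i ≠ j → t i j ∨ t j i
  p_irrefl : ∀ i, ¬ p i i
  p_trans : ∀ i j k, p i j → p j k → p i k
  sub : ∀ i j, p i j → t i j
  between : ∀ i j k, t i j → t j k → p i k → p i j

/-- The relation on `T_n`: `(t₁,p₁) ≤ (t₂,p₂)` iff `p₁ ⊆ p₂` and `t₂ ∩ t₁ᵒᵖ ⊆ p₂`. -/
def TPair.le {n : ℕ} (a b : TPair n) : Prop :=
  (∀ i j, a.p i j → b.p i j) ∧ (∀ i j, b.t i j → a.t j i → b.p i j)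

/-- The relation `(t₁,p₁) ≤ (t₂,p₂) ↔ p₁ ⊆ p₂ and t₂ ∩ t₁ᵒᵖ ⊆ p₂` is a partial order
on `T_n`: it is reflexive, transitive, and antisymmetric (where elements of `T_n` are
compared extensionally, as sets of ordered pairs). -/
theorem TPair.le_is_partial_order (n : ℕ) :
    (∀ a : TPair n, TPair.le a a) ∧
    (∀ a b c : TPair n, TPair.le a b → TPair.le b c → TPair.le a c) ∧
    (∀ a b : TPair n, TPair.le a b → TPair.le b a →
      (∀ i j, (a.t i j ↔ b.t i j) ∧ (a.p i j ↔ b.p i j))) := by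
  refine ⟨?_, ?_, ?_⟩
  · intro a
    exact ⟨fun i j h => h, fun i j h1 h2 => absurd (a.t_trans i j i h1 h2) (a.t_irrefl i)⟩
  · rintro a b c ⟨hp1, ht1⟩ ⟨hp2, ht2⟩
    refine ⟨fun i j h => hp2 _ _ (hp1 _ _ h), fun i j hc ha => ?_⟩
    by_cases hij : i = j
    · subst hij; exact absurd ha (a.t_irrefl i)
    · rcases b.t_total i j hij with hb | hb
      · exact hp2 _ _ (ht1 _ _ hb ha)
      · exact ht2 _ _ hc hb
  · rintro a b ⟨hp1, ht1⟩ ⟨hp2, ht2⟩ i j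
    have hpiff : ∀ i j, a.p i j ↔ b.p i j := fun i j => ⟨hp1 i j, hp2 i j⟩
    have htab : ∀ i j, a.t i j → b.t i j := by
      intro i j h
      by_contra hn
      have hij : i ≠ j := fun e => by subst e; exact a.t_irrefl i h
      rcases b.t_total i j hij with hb | hb
      · exact hn hb
      · have := hp2 _ _ (ht1 _ _ hb h)
        exact a.t_irrefl i (a.t_trans i j i h (a.sub _ _ this))
    have htba : ∀ i j, b.t i j → a.t i j := by
      intro i j h
      by_contra hn
      have hij : i ≠ j := fun e => by subst e; exact b.t_irrefl i h
      rcases a.t_total i j hij with ha | ha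
      · exact hn ha
      · have := hp1 _ _ (ht2 _ _ ha h)
        exact b.t_irrefl i (b.t_trans i j i h (b.sub _ _ this))
    exact ⟨⟨htab i j, htba i j⟩, hpiff i j⟩
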